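/- As formal distributions, ∑_{i,j,k≥0} C(i,k) X^{-2-i-j} Y^k Z^{j+i-k} = ∑_{i,j≥0} C(-2-i, j) (-1)^j X^{-2-i-j} Y^i Z^j, where both sides equal the expansion ι_{X,Z,Y}{(X-Z-Y)^{-1}(X-Z)^{-1}} of (X-Z-Y)^{-1}(X-Z)^{-1} in the region |X| > |Z| > |Y|. -/

import Mathlib

lemma ring_choose_key (b c : ℕ) :
    Ring.choose (-2 - (b:ℤ)) c * (-1)^c = ((b + c + 1).choose c : ℤ) := by
  have h : (-2 - (b:ℤ)) - c + 1 = Int.negSucc (b + c) := by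
    rw [Int.negSucc_eq]; push_cast; ring
  rw [Ring.choose, h]
  show Int.instBinomialRing.multichoose (Int.negSucc (b + c)) c * (-1)^c = _
  rw [show Int.instBinomialRing.multichoose = Int.multichoose from rfl, Int.multichoose]
  rw [Int.coe_negOnePow_natCast, mul_right_comm, ← mul_pow]
  simp [add_assoc]

/-- Coefficient-wise equality of the two expansions of
`(X-Z-Y)⁻¹ (X-Z)⁻¹` in the region `|X| > |Z| > |Y|`:
`∑_{i,j,k≥0} C(i,k) X^{-2-i-j} Y^k Z^{j+i-k}
  = ∑_{i,j≥0} C(-2-i,j) (-1)^j X^{-2-i-j} Y^i Z^j`.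
Both sides are read off as the coefficient of `X^a Y^b Z^c`. -/
theorem iterated_expansion_identity_one (a b c : ℤ) :
    (∑' p : ℕ × ℕ × ℕ,
        if a = -2 - (p.1 : ℤ) - (p.2.1 : ℤ) ∧ b = (p.2.2 : ℤ) ∧
            c = (p.1 : ℤ) + (p.2.1 : ℤ) - (p.2.2 : ℤ)
          then ((p.1.choose p.2.2 : ℤ) : ℂ) else 0)
    = ∑' p : ℕ × ℕ,
        if a = -2 - (p.1 : ℤ) - (p.2 : ℤ) ∧ b = (p.1 : ℤ) ∧ c = (p.2 : ℤ)
          then ((Ring.choose (-2 - (p.1 : ℤ)) p.2 * (-1) ^ p.2 : ℤ) : ℂ) else 0 := by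
  by_cases hmain : ∃ b' c' : ℕ, b = (b' : ℤ) ∧ c = (c' : ℤ) ∧ a = -2 - b' - c'
  · obtain ⟨b', c', hb, hc, ha⟩ := hmain
    have hRHS : (∑' p : ℕ × ℕ,
        if a = -2 - (p.1 : ℤ) - (p.2 : ℤ) ∧ b = (p.1 : ℤ) ∧ c = (p.2 : ℤ)
          then ((Ring.choose (-2 - (p.1 : ℤ)) p.2 * (-1) ^ p.2 : ℤ) : ℂ) else 0)
        = (((b' + c' + 1).choose c' : ℤ) : ℂ) := by
      rw [tsum_eq_single (b', c')]
      · rw [if_pos ⟨by rw [ha], hb, hc⟩, ring_choose_key]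
      · intro q hq
        rw [if_neg]
        rintro ⟨_, h1, h2⟩
        exact hq (Prod.ext (by exact_mod_cast (hb ▸ h1).symm) (by exact_mod_cast (hc ▸ h2).symm))
    rw [hRHS]
    set S : Finset (ℕ × ℕ × ℕ) :=
      (Finset.range (b' + c' + 1)).image (fun i => (i, b' + c' - i, b')) with hS
    rw [tsum_eq_sum (s := S) ?_]
    · rw [Finset.sum_image (by intro x _ y _ h; exact (Prod.mk.injEq _ _ _ _).mp h |>.1)]
      have hterm : ∀ i ∈ Finset.range (b' + c' + 1),
          (if a = -2 - (i : ℤ) - ((b' + c' - i : ℕ) : ℤ) ∧ b = (b' : ℤ) ∧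
              c = (i : ℤ) + ((b' + c' - i : ℕ) : ℤ) - (b' : ℤ)
            then ((i.choose b' : ℤ) : ℂ) else 0) = ((i.choose b' : ℤ) : ℂ) := by
        intro i hi
        rw [Finset.mem_range] at hi
        have hle : i ≤ b' + c' := by omega
        rw [if_pos]
        refine ⟨?_, hb, ?_⟩
        · rw [ha, Nat.cast_sub hle]; push_cast; ring
        · rw [hc, Nat.cast_sub hle]; push_cast; ring
      rw [Finset.sum_congr rfl hterm]
      have h1 : ∑ i ∈ Finset.range (b' + c' + 1), i.choose b'
          = ∑ m ∈ Finset.Icc b' (b' + c'), m.choose b' := by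
        rw [eq_comm]
        apply Finset.sum_subset
        · intro x hx
          rw [Finset.mem_Icc] at hx
          exact Finset.mem_range.mpr (by omega)
        · intro x hx hnx
          rw [Finset.mem_range] at hx
          rw [Finset.mem_Icc] at hnx
          exact Nat.choose_eq_zero_of_lt (by omega)
      have hsym := Nat.choose_symm (n := b' + c' + 1) (k := b' + 1) (by omega)
      rw [show b' + c' + 1 - (b' + 1) = c' from by omega] at hsym
      have hnat : ∑ i ∈ Finset.range (b' + c' + 1), i.choose b'
          = (b' + c' + 1).choose c' := by
        rw [h1, Nat.sum_Icc_choose, hsym]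
      rw [← hnat]
      push_cast
      ring
    · intro p hp
      rw [if_neg]
      rintro ⟨h1, h2, h3⟩
      apply hp
      have hk : p.2.2 = b' := by exact_mod_cast (hb ▸ h2).symm
      have hij : (p.1 : ℤ) + p.2.1 = b' + c' := by
        rw [ha] at h1; omega
      have hij' : p.1 + p.2.1 = b' + c' := by exact_mod_cast hij
      rw [hS, Finset.mem_image]
      exact ⟨p.1, Finset.mem_range.mpr (by omega),
        by rw [show b' + c' - p.1 = p.2.1 by omega, ← hk]⟩
  · have hL : ∀ p : ℕ × ℕ × ℕ,
        (if a = -2 - (p.1 : ℤ) - (p.2.1 : ℤ) ∧ b = (p.2.2 : ℤ) ∧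
            c = (p.1 : ℤ) + (p.2.1 : ℤ) - (p.2.2 : ℤ)
          then ((p.1.choose p.2.2 : ℤ) : ℂ) else 0) = 0 := by
      intro p
      split_ifs with h
      · obtain ⟨h1, h2, h3⟩ := h
        by_cases hik : p.2.2 ≤ p.1 + p.2.1
        · exact absurd ⟨p.2.2, p.1 + p.2.1 - p.2.2, h2, by omega, by omega⟩ hmain
        · simp [Nat.choose_eq_zero_of_lt (show p.1 < p.2.2 by omega)]
      · rfl
    have hR : ∀ p : ℕ × ℕ,
        (if a = -2 - (p.1 : ℤ) - (p.2 : ℤ) ∧ b = (p.1 : ℤ) ∧ c = (p.2 : ℤ)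
          then ((Ring.choose (-2 - (p.1 : ℤ)) p.2 * (-1) ^ p.2 : ℤ) : ℂ) else 0) = 0 := by
      intro p
      split_ifs with h
      · obtain ⟨h1, h2, h3⟩ := h
        exact absurd ⟨p.1, p.2, h2, h3, by omega⟩ hmain
      · rfl
    rw [tsum_congr hL, tsum_congr hR, tsum_zero, tsum_zero]
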